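/- arXiv:1606.00958 — 3 statements merged into one kernel-verified Lean document; each statement's English description precedes it below -/
import Mathlib

section
/- Let M be a standard n×n integer matrix and σ a permutation of {1,…,n}. If σ(M) is also standard, then σ is the identity permutation. -/
open Matrix

/-- The vector `β_{ij} ∈ ℤⁿ` (for `0 ≤ i < j ≤ n`): coordinates `i+1,…,j` (1-based),
i.e. 0-based coordinates `i,…,j-1`, equal 1, all others 0. -/
def beta (n i j : ℕ) : Fin n → ℤ := fun v => if i ≤ v.val ∧ v.val < j then 1 else 0

/-- Exchange matrix of the quiver `A_n` with straight orientation `1 → 2 → ⋯ → n`. -/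
def B0 (n : ℕ) : Matrix (Fin n) (Fin n) ℤ := fun u v =>
  if v.val = u.val + 1 then 1 else if u.val = v.val + 1 then -1 else 0

/-- Mutation of the exchange matrix `B` in direction `k`. -/
def mutateB (n : ℕ) (k : Fin n) (B : Matrix (Fin n) (Fin n) ℤ) :
    Matrix (Fin n) (Fin n) ℤ := fun u v =>
  if u = k ∨ v = k then -B u v
  else B u v + Int.sign (B u k) * max (B u k * B k v) 0

/-- Mutation of the `c`-matrix `C` in direction `k` (relative to `B`). -/
def mutateC (n : ℕ) (k : Fin n) (B C : Matrix (Fin n) (Fin n) ℤ) :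
    Matrix (Fin n) (Fin n) ℤ := fun u v =>
  if u = k then -C u v
  else C u v + Int.sign (B u k) * max (B u k * C k v) 0

/-- Mutation `μ_k(B, C)` of an extended exchange pair. -/
def mutate (n : ℕ) (k : Fin n)
    (p : Matrix (Fin n) (Fin n) ℤ × Matrix (Fin n) (Fin n) ℤ) :
    Matrix (Fin n) (Fin n) ℤ × Matrix (Fin n) (Fin n) ℤ :=
  (mutateB n k p.1, mutateC n k p.1 p.2)

/-- `(B, C)` is reachable from `(B₀, Iₙ)` by a finite sequence of mutations. -/
def Reachable (n : ℕ) (B C : Matrix (Fin n) (Fin n) ℤ) : Prop :=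
  ∃ L : List (Fin n), L.foldl (fun p k => mutate n k p) (B0 n, 1) = (B, C)

/-- `σ(M)`: the matrix whose `m`-th row is the `σ⁻¹(m)`-th row of `M`. -/
def rowPerm (n : ℕ) (σ : Equiv.Perm (Fin n)) (M : Matrix (Fin n) (Fin n) ℤ) :
    Matrix (Fin n) (Fin n) ℤ := fun u v => M (σ⁻¹ u) v

/-- A matrix is standard if (1) its diagonal entries are nonzero, (2) positive entries
lie on or above the diagonal and negative entries on or below it, and (3) every row
is `β_{ij}` or `-β_{ij}` for some `0 ≤ i < j ≤ n`. -/
def IsStandard (n : ℕ) (M : Matrix (Fin n) (Fin n) ℤ) : Prop :=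
  (∀ u, M u u ≠ 0) ∧
  (∀ u v, 0 < M u v → u ≤ v) ∧
  (∀ u v, M u v < 0 → v ≤ u) ∧
  (∀ u, ∃ i j, i < j ∧ j ≤ n ∧ (M u = beta n i j ∨ M u = -beta n i j))

/-- The transposition `(i+1, j)` of `{1,…,n}`, written 0-based as the swap of
`i` and `j-1` in `Fin n` (the identity if the indices are out of range). -/
def transp (n i j : ℕ) : Equiv.Perm (Fin n) :=
  if h : i < n ∧ j - 1 < n then Equiv.swap ⟨i, h.1⟩ ⟨j - 1, h.2⟩ else 1

/-- the only row permutation of a standard matrix yielding a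
standard matrix is the identity. -/
theorem standard_rowPerm_eq_one (n : ℕ) (M : Matrix (Fin n) (Fin n) ℤ)
    (σ : Equiv.Perm (Fin n))
    (hM : IsStandard n M) (hσM : IsStandard n (rowPerm n σ M)) :
    σ = 1 := by
  have key : ∀ u : Fin n, σ⁻¹ u = u := by
    intro u
    obtain ⟨hd, hpos, hneg, hrow⟩ := hM
    obtain ⟨hd', hpos', hneg', _⟩ := hσM
    obtain ⟨i, j, hij, hjn, hcase⟩ := hrow (σ⁻¹ u)
    have hin : i < n := lt_of_lt_of_le hij hjn
    have hjn' : j - 1 < n := by omega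
    rcases hcase with h | h
    · have h1 : i ≤ (σ⁻¹ u : Fin n).val ∧ ((σ⁻¹ u : Fin n) : ℕ) < j := by
        by_contra hc
        exact hd (σ⁻¹ u) (by rw [h]; simp [-Equiv.Perm.coe_inv, beta, hc])
      have h2 : i ≤ u.val ∧ u.val < j := by
        by_contra hc
        exact hd' u (by simp [-Equiv.Perm.coe_inv, rowPerm, h, beta, hc])
      have e1 : M (σ⁻¹ u) ⟨i, hin⟩ = 1 := by simp [-Equiv.Perm.coe_inv, h, beta, hij]
      have p1 : (σ⁻¹ u : Fin n) ≤ ⟨i, hin⟩ := hpos _ _ (by rw [e1]; norm_num)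
      have e2 : rowPerm n σ M u ⟨i, hin⟩ = 1 := by simp [-Equiv.Perm.coe_inv, rowPerm, h, beta, hij]
      have p2 : u ≤ ⟨i, hin⟩ := hpos' _ _ (by rw [e2]; norm_num)
      have : (σ⁻¹ u : Fin n).val = u.val := by
        have := h1.1; have := h2.1
        simp [-Equiv.Perm.coe_inv, Fin.le_def] at p1 p2
        omega
      exact Fin.ext this
    · have h1 : i ≤ (σ⁻¹ u : Fin n).val ∧ ((σ⁻¹ u : Fin n) : ℕ) < j := by
        by_contra hc
        exact hd (σ⁻¹ u) (by rw [h]; simp [-Equiv.Perm.coe_inv, beta, hc])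
      have h2 : i ≤ u.val ∧ u.val < j := by
        by_contra hc
        exact hd' u (by simp [-Equiv.Perm.coe_inv, rowPerm, h, beta, hc])
      have hjm : i ≤ j - 1 ∧ j - 1 < j := by omega
      have e1 : M (σ⁻¹ u) ⟨j - 1, hjn'⟩ = -1 := by simp [-Equiv.Perm.coe_inv, h, beta, hjm]
      have p1 : (⟨j - 1, hjn'⟩ : Fin n) ≤ σ⁻¹ u := hneg _ _ (by rw [e1]; norm_num)
      have e2 : rowPerm n σ M u ⟨j - 1, hjn'⟩ = -1 := by simp [-Equiv.Perm.coe_inv, rowPerm, h, beta, hjm]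
      have p2 : (⟨j - 1, hjn'⟩ : Fin n) ≤ u := hneg' _ _ (by rw [e2]; norm_num)
      have : (σ⁻¹ u : Fin n).val = u.val := by
        have := h1.2; have := h2.2
        simp [-Equiv.Perm.coe_inv, Fin.le_def] at p1 p2
        omega
      exact Fin.ext this
  ext u
  have h1 := key (σ u)
  rw [Equiv.Perm.coe_inv, Equiv.symm_apply_apply] at h1
  exact congrArg Fin.val h1.symm
end

section
/- Let M be a standard n×n integer matrix and 0 ≤ i < j ≤ n. If the ℓ-th row of M equals β_{ij}, then ℓ = i+1; and if the ℓ-th row of M equals −β_{ij}, then ℓ = j. -/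
open Matrix

/-- in a standard matrix, a row equal to `β_{ij}` must be the
`(i+1)`-st row, and a row equal to `-β_{ij}` must be the `j`-th row
(rows written here 0-based, so the 1-based row `ℓ` is `ℓ.val + 1`). -/
theorem standard_row_position (n : ℕ) (M : Matrix (Fin n) (Fin n) ℤ)
    (hM : IsStandard n M) (i j : ℕ) (hij : i < j) (hjn : j ≤ n) (ℓ : Fin n) :
    (M ℓ = beta n i j → ℓ.val = i) ∧ (M ℓ = -beta n i j → ℓ.val + 1 = j) := by
  obtain ⟨hdiag, hpos, hneg, -⟩ := hM
  have hin : i < n := lt_of_lt_of_le hij hjn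
  constructor
  · intro h
    -- diagonal entry nonzero ⇒ i ≤ ℓ < j
    have hd := hdiag ℓ
    rw [h] at hd
    simp only [beta] at hd
    have hrange : i ≤ ℓ.val ∧ ℓ.val < j := by
      by_contra hc; simp [hc] at hd
    -- entry at column i is 1 > 0 ⇒ ℓ ≤ i
    have h1 : 0 < M ℓ ⟨i, hin⟩ := by
      rw [h]; simp [beta, hij]
    have := hpos ℓ ⟨i, hin⟩ h1
    exact le_antisymm this hrange.1
  · intro h
    have hd := hdiag ℓ
    rw [h] at hd
    simp only [beta, Pi.neg_apply] at hd
    have hrange : i ≤ ℓ.val ∧ ℓ.val < j := by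
      by_contra hc; simp [hc] at hd
    have hn : 0 < n := ℓ.pos
    have hj1 : j - 1 < n := by omega
    have h1 : M ℓ ⟨j - 1, hj1⟩ < 0 := by
      rw [h]; simp only [Pi.neg_apply, beta]
      have : i ≤ j - 1 ∧ j - 1 < j := by omega
      simp [this]
    have := hneg ℓ ⟨j - 1, hj1⟩ h1
    simp only [Fin.le_def] at this
    omega
end

section
/- Let M and M′ be standard n×n integer matrices and σ, σ′ permutations of {1,…,n}. If σ(M) = σ′(M′), then σ = σ′ and M = M′. In particular, a matrix C admits at most one representation C = σ(M) with M standard, so the associated permutation σ of such a matrix C is well defined. -/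
open Matrix

/-- Rows of a standard matrix have no mixed signs. -/
lemma standard_no_mixed (n : ℕ) (M : Matrix (Fin n) (Fin n) ℤ)
    (hM : IsStandard n M) (u v w : Fin n)
    (hv : 0 < M u v) (hw : M u w < 0) : False := by
  obtain ⟨i, j, hij, hjn, hr | hr⟩ := hM.2.2.2 u
  · rw [hr] at hw
    simp only [beta] at hw
    split at hw <;> omega
  · rw [hr] at hv
    simp only [Pi.neg_apply, beta] at hv
    split at hv <;> omega

/-- A row of a standard matrix determines its index. -/
lemma standard_recover (n : ℕ) (M M' : Matrix (Fin n) (Fin n) ℤ)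
    (hM : IsStandard n M) (hM' : IsStandard n M') (u u' : Fin n)
    (h : M u = M' u') : u = u' := by
  have ha : M u u' ≠ 0 := by rw [h]; exact hM'.1 u'
  have hb : M u u ≠ 0 := hM.1 u
  have hbb : M' u' u = M u u := by rw [h]
  rcases lt_or_gt_of_ne ha with ha' | ha' <;>
    rcases lt_or_gt_of_ne hb with hb' | hb'
  · exact le_antisymm (hM'.2.2.1 u' u (hbb ▸ hb')) (hM.2.2.1 u u' ha')
  · exact absurd (standard_no_mixed n M hM u u u' hb' ha') id
  · exact absurd (standard_no_mixed n M hM u u' u ha' hb') id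
  · exact le_antisymm (hM.2.1 u u' ha') (hM'.2.1 u' u (hbb ▸ hb'))

/-- uniqueness of the representation `C = σ(M)` with `M` standard;
hence the associated permutation of such a matrix is well defined. -/
theorem standard_representation_unique (n : ℕ)
    (M M' : Matrix (Fin n) (Fin n) ℤ) (σ σ' : Equiv.Perm (Fin n))
    (hM : IsStandard n M) (hM' : IsStandard n M')
    (h : rowPerm n σ M = rowPerm n σ' M') :
    σ = σ' ∧ M = M' := by
  have hrow : ∀ m : Fin n, M (σ⁻¹ m) = M' (σ'⁻¹ m) := by
    intro m
    funext v
    exact congrFun (congrFun h m) v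
  have hperm : σ = σ' := by
    have hinv : σ⁻¹ = σ'⁻¹ := by
      ext m
      exact congrArg Fin.val (standard_recover n M M' hM hM' _ _ (hrow m))
    exact inv_injective hinv
  refine ⟨hperm, ?_⟩
  funext u v
  have := hrow (σ u)
  rw [hperm] at this
  simpa using congrFun this v
end
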